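/- Let P be the quotient of the free differential Poisson algebra on one generator v by the differential Poisson ideal generated by v·v'. Then {v, v^{(k+1)}} · v = 0 in P for all k ≥ 0, where v^{(i)} = d^i(v). -/

import Mathlib

open Finset

private lemma csym (n m i : ℕ) :
    n.choose m * (n - m).choose i = n.choose i * (n - i).choose m := by
  rcases le_or_gt (m + i) n with h | h
  · have h1 := Nat.choose_mul (n := n) (k := m + i) (s := m) (Nat.le_add_right m i)
    have h2 := Nat.choose_mul (n := n) (k := m + i) (s := i) (Nat.le_add_left i m)
    rw [Nat.add_sub_cancel_left] at h1
    rw [Nat.add_sub_cancel] at h2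
    have h3 : (m + i).choose m = (m + i).choose i := by
      rw [← Nat.choose_symm (Nat.le_add_left i m)]
      congr 1
      omega
    rw [← h1, ← h2, h3]
  · rcases le_or_gt m n with hm | hm
    · rcases le_or_gt i n with hi | hi
      · rw [Nat.choose_eq_zero_of_lt (show n - m < i by omega),
          Nat.choose_eq_zero_of_lt (show n - i < m by omega)]
        ring
      · rw [Nat.choose_eq_zero_of_lt hi, Nat.choose_eq_zero_of_lt (show n - m < i by omega)]
        ring
    · rw [Nat.choose_eq_zero_of_lt hm, Nat.choose_eq_zero_of_lt (show n - i < m by omega)]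
      ring



/-- in a differential Poisson algebra in which `v·v' = 0`
(e.g. the quotient of the free differential Poisson algebra on `v` by the
differential Poisson ideal generated by `v·v'`), one has
`{v, v^{(k+1)}}·v = 0` for all `k ≥ 0`. -/
theorem stmt_11 {k : Type*} [Field k] [CharZero k]
    (P : Type*) [CommRing P] [Algebra k P]
    (br : P → P → P)
    (br_add_left : ∀ a b c : P, br (a + b) c = br a c + br b c)
    (br_add_right : ∀ a b c : P, br a (b + c) = br a b + br a c)
    (br_smul_left : ∀ (r : k) (a b : P), br (r • a) b = r • br a b)
    (br_smul_right : ∀ (r : k) (a b : P), br a (r • b) = r • br a b)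
    (br_skew : ∀ a b : P, br a b = - br b a)
    (br_jacobi : ∀ a b c : P, br a (br b c) = br (br a b) c + br b (br a c))
    (br_leibniz : ∀ a b c : P, br a (b * c) = b * br a c + br a b * c)
    (d : P → P)
    (d_add : ∀ a b : P, d (a + b) = d a + d b)
    (d_smul : ∀ (r : k) (a : P), d (r • a) = r • d a)
    (d_mul : ∀ a b : P, d (a * b) = d a * b + a * d b)
    (d_br : ∀ a b : P, d (br a b) = br (d a) b + br a (d b))
    (v : P) (hv : v * d v = 0) :
    ∀ K : ℕ, br v (d^[K + 1] v) * v = 0 := by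
  intro K
  classical
  set w : ℕ → P := fun i => d^[i] v with hw
  have w0 : w 0 = v := rfl
  have wsucc : ∀ i, w (i + 1) = d (w i) := fun i => Function.iterate_succ_apply' d i v
  -- basic additive facts
  have d_zero : d 0 = 0 := map_zero (AddMonoidHom.mk' d d_add)
  have d_nsmul : ∀ (n : ℕ) (a : P), d (n • a) = n • d a :=
    fun n a => map_nsmul (AddMonoidHom.mk' d d_add) n a
  have d_sum : ∀ (s : Finset ℕ) (f : ℕ → P), d (∑ i ∈ s, f i) = ∑ i ∈ s, d (f i) :=
    fun s f => map_sum (AddMonoidHom.mk' d d_add) f s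
  have br_zero_right : ∀ a : P, br a 0 = 0 :=
    fun a => map_zero (AddMonoidHom.mk' (br a) (br_add_right a))
  have br_nsmul_right : ∀ (a : P) (n : ℕ) (b : P), br a (n • b) = n • br a b :=
    fun a n b => map_nsmul (AddMonoidHom.mk' (br a) (br_add_right a)) n b
  have br_sum_right : ∀ (a : P) (s : Finset ℕ) (f : ℕ → P),
      br a (∑ i ∈ s, f i) = ∑ i ∈ s, br a (f i) :=
    fun a s f => map_sum (AddMonoidHom.mk' (br a) (br_add_right a)) f s
  -- br a a = 0 (uses that 2 is invertible in P via the ℚ-algebra structure)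
  have br_self : ∀ a : P, br a a = 0 := by
    intro a
    have h2 : (2 : P) * br a a = 0 := by
      have h := br_skew a a
      have h' : br a a + br a a = 0 := by linear_combination h
      rw [two_mul, h']
    have h2P : (algebraMap k P) 2 = (2 : P) := map_ofNat _ 2
    calc br a a = ((algebraMap k P) (2⁻¹) * (algebraMap k P) 2) * br a a := by
          rw [← map_mul]; norm_num
      _ = (algebraMap k P) (2⁻¹) * ((2 : P) * br a a) := by rw [h2P, mul_assoc]
      _ = 0 := by rw [h2, mul_zero]
  -- iterated Leibniz rule
  have hiter : ∀ n, d^[n] (v * d v)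
      = ∑ i ∈ range (n + 1), n.choose i • (w i * w (n + 1 - i)) := by
    intro n
    induction n with
    | zero => simp [hw]
    | succ n ih =>
      rw [Function.iterate_succ_apply', ih, d_sum]
      have e1 : ∀ i ∈ range (n + 1),
          d (n.choose i • (w i * w (n + 1 - i)))
            = n.choose i • (w (i + 1) * w (n + 1 - i))
              + n.choose i • (w i * w (n + 2 - i)) := by
        intro i hi
        rw [mem_range] at hi
        have h2 : n + 2 - i = (n + 1 - i) + 1 := by omega
        rw [d_nsmul, d_mul, ← wsucc i, ← wsucc (n + 1 - i), ← h2, smul_add]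
      rw [sum_congr rfl e1, sum_add_distrib]
      rw [sum_range_succ' (fun i => (n + 1).choose i • (w i * w (n + 1 + 1 - i))) (n + 1)]
      have e2 : ∀ i ∈ range (n + 1),
          (n + 1).choose (i + 1) • (w (i + 1) * w (n + 1 + 1 - (i + 1)))
            = n.choose i • (w (i + 1) * w (n + 1 - i))
              + n.choose (i + 1) • (w (i + 1) * w (n + 1 - i)) := by
        intro i hi
        have h3 : n + 1 + 1 - (i + 1) = n + 1 - i := by omega
        rw [h3, Nat.choose_succ_succ, add_smul]
      rw [sum_congr rfl e2, sum_add_distrib]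
      have e3 : ∑ i ∈ range (n + 1), n.choose i • (w i * w (n + 2 - i))
          = ∑ i ∈ range (n + 1), n.choose (i + 1) • (w (i + 1) * w (n + 1 - i))
            + (n + 1).choose 0 • (w 0 * w (n + 1 + 1 - 0)) := by
        rw [sum_range_succ' (fun i => n.choose i • (w i * w (n + 2 - i))) n]
        congr 1
        · rw [sum_range_succ]
          have h5 : n.choose (n + 1) = 0 := Nat.choose_eq_zero_of_lt (by omega)
          rw [h5, zero_smul, add_zero]
          refine sum_congr rfl fun i hi => ?_
          have h4 : n + 2 - (i + 1) = n + 1 - i := by omega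
          rw [h4]
        · simp
      rw [e3]
      ring
  have dzero_iter : ∀ n, d^[n] (0 : P) = 0 := by
    intro n
    induction n with
    | zero => rfl
    | succ n ih => rw [Function.iterate_succ_apply', ih, d_zero]
  have hS : ∀ n, ∑ i ∈ range (n + 1), n.choose i • (w i * w (n + 1 - i)) = 0 := by
    intro n
    rw [← hiter, hv, dzero_iter]
  have hE : ∀ m n : ℕ,
      ∑ i ∈ range (n + 2), (n + 1).choose i • (br (w m) (w i) * w (n + 1 - i)) = 0 := by
    intro m n
    have h0 : ∑ i ∈ range (n + 1), br (w m) (n.choose i • (w i * w (n + 1 - i))) = 0 := by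
      rw [← br_sum_right, hS n, br_zero_right]
    have e1 : ∀ i ∈ range (n + 1),
        br (w m) (n.choose i • (w i * w (n + 1 - i)))
          = n.choose i • (w i * br (w m) (w (n + 1 - i)))
            + n.choose i • (br (w m) (w i) * w (n + 1 - i)) := by
      intro i hi
      rw [br_nsmul_right, br_leibniz, smul_add]
    rw [sum_congr rfl e1, sum_add_distrib] at h0
    have e2 : ∑ i ∈ range (n + 1), n.choose i • (w i * br (w m) (w (n + 1 - i)))
        = ∑ i ∈ range (n + 1), n.choose i • (br (w m) (w (i + 1)) * w (n - i)) := by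
      rw [← sum_range_reflect]
      refine sum_congr rfl fun i hi => ?_
      rw [mem_range] at hi
      have h1 : n + 1 - 1 - i = n - i := by omega
      have h2 : n + 1 - (n - i) = i + 1 := by omega
      rw [h1, h2, Nat.choose_symm (show i ≤ n by omega),
        mul_comm (w (n - i)) (br (w m) (w (i + 1)))]
    rw [e2] at h0
    rw [sum_range_succ' (fun i => (n + 1).choose i • (br (w m) (w i) * w (n + 1 - i))) (n + 1)]
    have e3 : ∀ i ∈ range (n + 1),
        (n + 1).choose (i + 1) • (br (w m) (w (i + 1)) * w (n + 1 - (i + 1)))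
          = n.choose i • (br (w m) (w (i + 1)) * w (n - i))
            + n.choose (i + 1) • (br (w m) (w (i + 1)) * w (n - i)) := by
      intro i hi
      have h3 : n + 1 - (i + 1) = n - i := by omega
      rw [h3, Nat.choose_succ_succ, add_smul]
    rw [sum_congr rfl e3, sum_add_distrib]
    have e4 : ∑ i ∈ range (n + 1), n.choose (i + 1) • (br (w m) (w (i + 1)) * w (n - i))
          + (n + 1).choose 0 • (br (w m) (w 0) * w (n + 1 - 0))
        = ∑ i ∈ range (n + 1), n.choose i • (br (w m) (w i) * w (n + 1 - i)) := by
      rw [sum_range_succ' (fun i => n.choose i • (br (w m) (w i) * w (n + 1 - i))) n]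
      congr 1
      · rw [sum_range_succ]
        have h5 : n.choose (n + 1) = 0 := Nat.choose_eq_zero_of_lt (by omega)
        rw [h5, zero_smul, add_zero]
        refine sum_congr rfl fun i hi => ?_
        have h4 : n + 1 - (i + 1) = n - i := by omega
        rw [h4]
      · simp
    rw [add_assoc, e4]
    exact h0
  set G : ℕ × ℕ → P := fun p =>
    ((K + 1).choose p.1 * (K + 1 - p.1).choose p.2)
      • (br (w p.1) (w p.2) * w (K + 1 - p.1 - p.2)) with hG
  set S : Finset (ℕ × ℕ) :=
    (range (K + 2) ×ˢ range (K + 2)).filter (fun p => p.1 + p.2 ≤ K + 1) with hSdef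
  have hGswap : ∀ p : ℕ × ℕ, G p + G p.swap = 0 := by
    rintro ⟨m, i⟩
    show ((K + 1).choose m * (K + 1 - m).choose i) • (br (w m) (w i) * w (K + 1 - m - i))
        + ((K + 1).choose i * (K + 1 - i).choose m) • (br (w i) (w m) * w (K + 1 - i - m)) = 0
    have hc := csym (K + 1) m i
    have hidx : K + 1 - i - m = K + 1 - m - i := by omega
    rw [hidx, ← hc, br_skew (w i) (w m), neg_mul, smul_neg, add_neg_cancel]
  have hinv0 : ∑ p ∈ S, G p = 0 := by
    refine sum_involution (fun p _ => p.swap) (fun p _ => hGswap p) ?_ ?_ ?_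
    · rintro ⟨m, i⟩ _ hne heq
      apply hne
      have hmi : i = m := by simpa using congrArg Prod.fst heq
      subst hmi
      show ((K + 1).choose i * (K + 1 - i).choose i) • (br (w i) (w i) * w (K + 1 - i - i)) = 0
      rw [br_self, zero_mul, smul_zero]
    · rintro ⟨m, i⟩ hp
      simp only [hSdef, mem_filter, mem_product, mem_range, Prod.swap_prod_mk] at hp ⊢
      exact ⟨⟨hp.1.2, hp.1.1⟩, by omega⟩
    · rintro ⟨m, i⟩ _
      rfl
  have hN : ∑ p ∈ S, G p = ∑ m ∈ range (K + 2), ∑ i ∈ range (K + 2 - m), G (m, i) := by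
    rw [hSdef, sum_filter, sum_product]
    refine sum_congr rfl fun m hm => ?_
    rw [← sum_filter]
    refine sum_congr ?_ (fun i _ => rfl)
    ext i
    simp only [mem_filter, mem_range]
    omega
  have hinner : ∀ m ∈ range (K + 1), ∑ i ∈ range (K + 2 - m), G (m, i) = 0 := by
    intro m hm
    rw [mem_range] at hm
    have h1 : K + 2 - m = (K - m) + 2 := by omega
    have h2 : K + 1 - m = (K - m) + 1 := by omega
    have e : ∀ i, G (m, i)
        = (K + 1).choose m
          • (((K - m) + 1).choose i • (br (w m) (w i) * w ((K - m) + 1 - i))) := by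
      intro i
      show ((K + 1).choose m * (K + 1 - m).choose i)
          • (br (w m) (w i) * w (K + 1 - m - i)) = _
      rw [mul_smul, h2]
    calc ∑ i ∈ range (K + 2 - m), G (m, i)
        = (K + 1).choose m • ∑ i ∈ range ((K - m) + 2),
            ((K - m) + 1).choose i • (br (w m) (w i) * w ((K - m) + 1 - i)) := by
          rw [h1, smul_sum]
          exact sum_congr rfl fun i _ => e i
      _ = 0 := by rw [hE m (K - m), smul_zero]
  have hfinal : br (w (K + 1)) (w 0) * w 0 = 0 := by
    have h1 : ∑ m ∈ range (K + 2), ∑ i ∈ range (K + 2 - m), G (m, i) = 0 := by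
      rw [← hN, hinv0]
    rw [sum_range_succ, sum_eq_zero hinner, zero_add] at h1
    have h2 : K + 2 - (K + 1) = 1 := by omega
    rw [h2, sum_range_one] at h1
    have h3 : G (K + 1, 0) = br (w (K + 1)) (w 0) * w 0 := by
      show ((K + 1).choose (K + 1) * (K + 1 - (K + 1)).choose 0)
          • (br (w (K + 1)) (w 0) * w (K + 1 - (K + 1) - 0)) = _
      simp
    rw [h3] at h1
    exact h1
  have hgoal : br v (w (K + 1)) * v = 0 := by
    rw [br_skew v (w (K + 1)), ← w0, neg_mul, hfinal, neg_zero]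
  exact hgoal
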